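/- For all α > 1, σ > 0, a > 0 and reals θ, c, with Δ(u) = Φ((a−u)/σ) − Φ((−a−u)/σ), the following inequality holds: exp((α²−α)c²/(2σ²)) · Δ(θ + (1−α)c) + Φ((−a−θ)/σ)^α · Φ((−a−θ−c)/σ)^{1−α} + Φ((θ−a)/σ)^α · Φ((θ+c−a)/σ)^{1−α} ≤ exp((α²−α)c²/(2σ²)). Equivalently, the Rényi divergence of order α between the rectified Gaussians N^R(θ, σ², [−a,a]) and N^R(θ+c, σ², [−a,a]) is at most α·c²/(2σ²), the Rényi divergence of order α between the Gaussians N(θ, σ²) and N(θ+c, σ²). -/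

import Mathlib

open MeasureTheory Real Filter

/-- Standard Gaussian density. -/
noncomputable def phi (x : ℝ) : ℝ := (Real.sqrt (2 * Real.pi))⁻¹ * Real.exp (-(x ^ 2) / 2)

/-- Standard Gaussian cumulative distribution function. -/
noncomputable def Phi (x : ℝ) : ℝ := ∫ t in Set.Iic x, phi t

/-- Mass of the Gaussian `N(u, σ²)` on `[−a, a]`. -/
noncomputable def Δ (a σ u : ℝ) : ℝ := Phi ((a - u) / σ) - Phi ((-a - u) / σ)


section Aux
open Set

lemma phi_pos (x : ℝ) : 0 < phi x := by
  have : (0:ℝ) < Real.sqrt (2 * Real.pi) := Real.sqrt_pos.2 (by positivity)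
  exact mul_pos (inv_pos.2 this) (Real.exp_pos _)

lemma phi_eq_exp (x : ℝ) : phi x = Real.exp (-(x ^ 2) / 2 - Real.log (Real.sqrt (2 * Real.pi))) := by
  have h : (0:ℝ) < Real.sqrt (2 * Real.pi) := Real.sqrt_pos.2 (by positivity)
  rw [Real.exp_sub, Real.exp_log h, phi]
  ring

lemma integrable_phi : Integrable phi := by
  have := (integrable_exp_neg_mul_sq (b := (1:ℝ)/2) (by norm_num)).const_mul (Real.sqrt (2 * Real.pi))⁻¹
  refine this.congr (Eventually.of_forall fun x => ?_)
  rw [phi, show -(x^2)/2 = -(1/2)*x^2 from by ring]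

lemma integral_phi : ∫ x, phi x = 1 := by
  have h : ∫ x : ℝ, Real.exp (-(1/2) * x ^ 2) = Real.sqrt (π / (1/2)) := integral_gaussian (1/2)
  have h2 : (fun x : ℝ => phi x) = fun x => (Real.sqrt (2 * Real.pi))⁻¹ * Real.exp (-(1/2) * x ^ 2) := by
    funext x; rw [phi, show -(x^2)/2 = -(1/2)*x^2 from by ring]
  rw [h2, integral_const_mul, h]
  have : π / (1/2 : ℝ) = 2 * π := by ring
  rw [this, inv_mul_cancel₀ (ne_of_gt (Real.sqrt_pos.2 (by positivity)))]

lemma integrable_phi_add (s : ℝ) : Integrable (fun x => phi (x + s)) :=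
  integrable_phi.comp_add_right s

lemma Phi_eq_shift (s : ℝ) : Phi s = ∫ x in Set.Iic (0:ℝ), phi (x + s) := by
  rw [Phi]
  have hmp : MeasurePreserving (fun x : ℝ => x + s) volume volume :=
    measurePreserving_add_right volume s
  have hemb : MeasurableEmbedding (fun x : ℝ => x + s) :=
    (Homeomorph.addRight s).isClosedEmbedding.measurableEmbedding
  have := hmp.setIntegral_preimage_emb hemb phi (Set.Iic s)
  rw [← this]
  congr 1
  ext x
  simp

lemma Phi_pos (s : ℝ) : 0 < Phi s := by
  rw [Phi, setIntegral_pos_iff_support_of_nonneg_ae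
    (Eventually.of_forall fun x => (phi_pos x).le) integrable_phi.integrableOn]
  have : Function.support phi = Set.univ := by
    ext x; simp [Function.mem_support, ne_of_gt (phi_pos x)]
  rw [this, Set.univ_inter]
  simp [Real.volume_Iic]

lemma Phi_add_neg (s : ℝ) : Phi s + Phi (-s) = 1 := by
  have h1 : Phi (-s) = ∫ x in Set.Ioi s, phi x := by
    rw [Phi, ← integral_comp_neg_Ioi]
    exact integral_congr_ae (Eventually.of_forall fun x => by simp [phi])
  rw [Phi, h1, intervalIntegral.integral_Iic_add_Ioi integrable_phi.integrableOn integrable_phi.integrableOn,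
    integral_phi]

lemma phi_rpow_identity (α s t x : ℝ) :
    phi (x + s) ^ α * phi (x + t) ^ (1 - α) =
      Real.exp (α * (α - 1) * (s - t) ^ 2 / 2) * phi (x + (α * s + (1 - α) * t)) := by
  simp only [phi_eq_exp, ← Real.exp_mul, ← Real.exp_add]
  congr 1
  ring

lemma memLp_of_int_rpow {μ : Measure ℝ} {f : ℝ → ℝ} {p : ℝ} (hp : 0 < p)
    (hf : AEStronglyMeasurable f μ) (h0 : ∀ x, 0 ≤ f x)
    (hi : Integrable (fun x => f x ^ p) μ) : MemLp f (ENNReal.ofReal p) μ := by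
  have hq0 : (ENNReal.ofReal p) ≠ 0 := by simp [hp, hp.le, ENNReal.ofReal_eq_zero, not_le]
  have hqt : (ENNReal.ofReal p) ≠ ⊤ := ENNReal.ofReal_ne_top
  have h1 : MemLp (fun x => ‖f x‖ ^ (ENNReal.ofReal p).toReal)
      (ENNReal.ofReal p / ENNReal.ofReal p) μ := by
    rw [ENNReal.div_self hq0 hqt]
    rw [memLp_one_iff_integrable]
    refine hi.congr (Eventually.of_forall fun x => ?_)
    simp only [Real.norm_of_nonneg (h0 x), ENNReal.toReal_ofReal hp.le]
  exact (memLp_norm_rpow_iff hf hq0 hqt).mp h1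

lemma continuous_phi : Continuous phi := by
  unfold phi; fun_prop

lemma key_lemma {α : ℝ} (hα : 1 < α) (s t : ℝ) :
    Phi s ^ α * Phi t ^ (1 - α) ≤
      Real.exp (α * (α - 1) * (s - t) ^ 2 / 2) * Phi (α * s + (1 - α) * t) := by
  have hα0 : (0:ℝ) < α := lt_trans one_pos hα
  have hα1 : (0:ℝ) < α - 1 := by linarith
  set m : ℝ := α * s + (1 - α) * t with hm
  set K : ℝ := Real.exp (α * (α - 1) * (s - t) ^ 2 / 2) with hK
  set q : ℝ := α / (α - 1) with hq
  have hq0 : (0:ℝ) < q := div_pos hα0 hα1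
  have hpq : α.HolderConjugate q := (Real.holderConjugate_iff_eq_conjExponent hα).mpr hq
  set μ : Measure ℝ := volume.restrict (Set.Iic (0:ℝ)) with hμ
  set f : ℝ → ℝ := fun x => phi (x + s) * phi (x + t) ^ ((1 - α)/α) with hf
  set g : ℝ → ℝ := fun x => phi (x + t) ^ ((α - 1)/α) with hg
  have hfpos : ∀ x, 0 < f x := fun x =>
    mul_pos (phi_pos _) (Real.rpow_pos_of_pos (phi_pos _) _)
  have hgpos : ∀ x, 0 < g x := fun x => Real.rpow_pos_of_pos (phi_pos _) _
  have hfα : ∀ x, f x ^ α = K * phi (x + m) := by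
    intro x
    rw [hf, Real.mul_rpow (phi_pos _).le (Real.rpow_pos_of_pos (phi_pos _) _).le,
      ← Real.rpow_mul (phi_pos _).le, div_mul_cancel₀ _ (ne_of_gt hα0),
      phi_rpow_identity]
  have hgq : ∀ x, g x ^ q = phi (x + t) := by
    intro x
    rw [hg, ← Real.rpow_mul (phi_pos _).le, hq,
      div_mul_div_comm, mul_comm (α-1) α, div_self (by positivity), Real.rpow_one]
  have hfg : ∀ x, f x * g x = phi (x + s) := by
    intro x
    rw [hf, hg, mul_assoc, ← Real.rpow_add (phi_pos _),
      show (1 - α)/α + (α - 1)/α = 0 by ring, Real.rpow_zero, mul_one]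
  have hfc : Continuous f := by
    apply (continuous_phi.comp (by fun_prop)).mul
    exact (continuous_phi.comp (by fun_prop)).rpow_const
      (fun x => Or.inl (ne_of_gt (phi_pos _)))
  have hgc : Continuous g :=
    (continuous_phi.comp (by fun_prop)).rpow_const (fun x => Or.inl (ne_of_gt (phi_pos _)))
  have hfmem : MemLp f (ENNReal.ofReal α) μ := by
    refine memLp_of_int_rpow hα0 hfc.aestronglyMeasurable (fun x => (hfpos x).le) ?_
    have : (fun x => f x ^ α) = fun x => K * phi (x + m) := funext hfα
    rw [this]
    exact (((integrable_phi_add m).const_mul K)).restrict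
  have hgmem : MemLp g (ENNReal.ofReal q) μ := by
    refine memLp_of_int_rpow hq0 hgc.aestronglyMeasurable (fun x => (hgpos x).le) ?_
    have : (fun x => g x ^ q) = fun x => phi (x + t) := funext hgq
    rw [this]
    exact (integrable_phi_add t).restrict
  have H := integral_mul_le_Lp_mul_Lq_of_nonneg hpq
    (Eventually.of_forall fun x => (hfpos x).le)
    (Eventually.of_forall fun x => (hgpos x).le) hfmem hgmem
  rw [show (∫ x, f x * g x ∂μ) = Phi s by
      rw [Phi_eq_shift]; exact integral_congr_ae (Eventually.of_forall fun x => hfg x),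
    show (∫ x, f x ^ α ∂μ) = K * Phi m by
      rw [Phi_eq_shift, ← integral_const_mul]
      exact integral_congr_ae (Eventually.of_forall fun x => hfα x),
    show (∫ x, g x ^ q ∂μ) = Phi t by
      rw [Phi_eq_shift]; exact integral_congr_ae (Eventually.of_forall fun x => hgq x)] at H
  -- now H : Phi s ≤ (K * Phi m) ^ (1/α) * Phi t ^ (1/q)
  have hKM : (0:ℝ) < K * Phi m := mul_pos (Real.exp_pos _) (Phi_pos m)
  have hB : (0:ℝ) < Phi t := Phi_pos t
  have h2 : Phi s ^ α ≤ (K * Phi m) * Phi t ^ (α - 1) := by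
    calc Phi s ^ α ≤ ((K * Phi m) ^ (1/α) * Phi t ^ (1/q)) ^ α :=
          Real.rpow_le_rpow (Phi_pos s).le H hα0.le
      _ = (K * Phi m) * Phi t ^ (α - 1) := by
          rw [Real.mul_rpow (Real.rpow_nonneg hKM.le _) (Real.rpow_nonneg hB.le _),
            ← Real.rpow_mul hKM.le, ← Real.rpow_mul hB.le,
            one_div_mul_cancel (ne_of_gt hα0), Real.rpow_one, hq]
          congr 2
          field_simp
  calc Phi s ^ α * Phi t ^ (1 - α) ≤ ((K * Phi m) * Phi t ^ (α - 1)) * Phi t ^ (1 - α) :=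
        mul_le_mul_of_nonneg_right h2 (Real.rpow_nonneg hB.le _)
    _ = K * Phi m := by
        rw [mul_assoc, ← Real.rpow_add hB, show α - 1 + (1 - α) = 0 by ring,
          Real.rpow_zero, mul_one]

theorem rectified_gaussian_renyi_amplification' (α σ a θ c : ℝ)
    (hα : 1 < α) (hσ : 0 < σ) (ha : 0 < a) :
    Real.exp ((α ^ 2 - α) * c ^ 2 / (2 * σ ^ 2)) * (Phi ((a - (θ + (1-α)*c)) / σ) - Phi ((-a - (θ + (1-α)*c)) / σ)) +
        Phi ((-a - θ) / σ) ^ α * Phi ((-a - θ - c) / σ) ^ (1 - α) +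
        Phi ((θ - a) / σ) ^ α * Phi ((θ + c - a) / σ) ^ (1 - α) ≤
      Real.exp ((α ^ 2 - α) * c ^ 2 / (2 * σ ^ 2)) := by
  have hσ' : σ ≠ 0 := ne_of_gt hσ
  set u : ℝ := θ + (1 - α) * c with hu
  set K : ℝ := Real.exp ((α ^ 2 - α) * c ^ 2 / (2 * σ ^ 2)) with hK
  have h1 : Phi ((-a - θ) / σ) ^ α * Phi ((-a - θ - c) / σ) ^ (1 - α) ≤
      K * Phi ((-a - u) / σ) := by
    have h := key_lemma hα ((-a - θ) / σ) ((-a - θ - c) / σ)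
    have e1 : α * (α - 1) * ((-a - θ) / σ - (-a - θ - c) / σ) ^ 2 / 2 =
        (α ^ 2 - α) * c ^ 2 / (2 * σ ^ 2) := by field_simp; ring
    have e2 : α * ((-a - θ) / σ) + (1 - α) * ((-a - θ - c) / σ) = (-a - u) / σ := by
      rw [hu]; field_simp; ring
    rwa [e1, e2] at h
  have h2 : Phi ((θ - a) / σ) ^ α * Phi ((θ + c - a) / σ) ^ (1 - α) ≤
      K * Phi ((u - a) / σ) := by
    have h := key_lemma hα ((θ - a) / σ) ((θ + c - a) / σ)
    have e1 : α * (α - 1) * ((θ - a) / σ - (θ + c - a) / σ) ^ 2 / 2 =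
        (α ^ 2 - α) * c ^ 2 / (2 * σ ^ 2) := by field_simp; ring
    have e2 : α * ((θ - a) / σ) + (1 - α) * ((θ + c - a) / σ) = (u - a) / σ := by
      rw [hu]; field_simp; ring
    rwa [e1, e2] at h
  have hsum : Phi ((a - u) / σ) + Phi ((u - a) / σ) = 1 := by
    have := Phi_add_neg ((a - u) / σ)
    rwa [show -((a - u) / σ) = (u - a) / σ by ring] at this
  have h3 : K * Phi ((a - u) / σ) = K - K * Phi ((u - a) / σ) := by
    have : Phi ((a - u) / σ) = 1 - Phi ((u - a) / σ) := by linarith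
    rw [this]; ring
  nlinarith [h1, h2, h3, mul_sub K (Phi ((a - u) / σ)) (Phi ((-a - u) / σ))]

end Aux

/-- The Rényi divergence of order `α` between two rectified Gaussians is at most
that between the corresponding Gaussians, `α·c²/(2σ²)`. -/
theorem rectified_gaussian_renyi_amplification (α σ a θ c : ℝ)
    (hα : 1 < α) (hσ : 0 < σ) (ha : 0 < a) :
    Real.exp ((α ^ 2 - α) * c ^ 2 / (2 * σ ^ 2)) * Δ a σ (θ + (1 - α) * c) +
        Phi ((-a - θ) / σ) ^ α * Phi ((-a - θ - c) / σ) ^ (1 - α) +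
        Phi ((θ - a) / σ) ^ α * Phi ((θ + c - a) / σ) ^ (1 - α) ≤
      Real.exp ((α ^ 2 - α) * c ^ 2 / (2 * σ ^ 2)) := by
  simp only [Δ]
  exact rectified_gaussian_renyi_amplification' α σ a θ c hα hσ ha
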